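/- If S̃ ∈ Sp(ℂ^{n₁+n₂}) with doubled-up blocks Ŝ_{jk}, and X ∈ Sp(ℂ^{n₂}) is such that I − Ŝ₂₂ X is invertible, then Ψ(X) = Ŝ₁₁ + Ŝ₁₂ X (I − Ŝ₂₂ X)^{-1} Ŝ₂₁ lies in Sp(ℂ^{n₁}). In particular, if I − Ŝ₂₂ is invertible then Ŝ₁₁ + Ŝ₁₂ (I − Ŝ₂₂)^{-1} Ŝ₂₁ ∈ Sp(ℂ^{n₁}). -/
import Mathlib


open Matrix

noncomputable section

/-- Doubled-up matrix `Δ(E₋,E₊)`. -/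
def dbl {R K : Type*} (Em Ep : Matrix R K ℂ) : Matrix (R ⊕ R) (K ⊕ K) ℂ :=
  Matrix.fromBlocks Em Ep (Ep.map (starRingEnd ℂ)) (Em.map (starRingEnd ℂ))

/-- The matrix `J = diag(I, -I)`. -/
def Jm (N : Type*) [DecidableEq N] : Matrix (N ⊕ N) (N ⊕ N) ℂ :=
  Matrix.fromBlocks 1 0 0 (-1)

/-- The `♭` involution `X^♭ = J Xᴴ J`. -/
def flatB {N M : Type*} [Fintype N] [DecidableEq N] [Fintype M] [DecidableEq M]
    (X : Matrix (N ⊕ N) (M ⊕ M) ℂ) : Matrix (M ⊕ M) (N ⊕ N) ℂ :=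
  Jm M * Xᴴ * Jm N

/-- Bogoliubov matrix: doubled-up and `♭`-unitary. -/
def IsBog {N : Type*} [Fintype N] [DecidableEq N]
    (S : Matrix (N ⊕ N) (N ⊕ N) ℂ) : Prop :=
  (∃ Sm Sp, S = dbl Sm Sp) ∧ flatB S * S = 1 ∧ S * flatB S = 1

section Helpers

variable {N M P : Type*} [Fintype N] [DecidableEq N] [Fintype M] [DecidableEq M]
  [Fintype P] [DecidableEq P]

lemma Jm_mul_Jm (N : Type*) [Fintype N] [DecidableEq N] : Jm N * Jm N = 1 := by
  simp [Jm, Matrix.fromBlocks_multiply, Matrix.fromBlocks_one]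

lemma flatB_add (A B : Matrix (N ⊕ N) (M ⊕ M) ℂ) : flatB (A + B) = flatB A + flatB B := by
  simp [flatB, conjTranspose_add, Matrix.add_mul, Matrix.mul_add]

lemma flatB_sub (A B : Matrix (N ⊕ N) (M ⊕ M) ℂ) : flatB (A - B) = flatB A - flatB B := by
  simp [flatB, conjTranspose_sub, Matrix.sub_mul, Matrix.mul_sub]

lemma flatB_one : flatB (1 : Matrix (N ⊕ N) (N ⊕ N) ℂ) = 1 := by
  simp [flatB, Jm_mul_Jm]

lemma flatB_mul (A : Matrix (N ⊕ N) (P ⊕ P) ℂ) (B : Matrix (P ⊕ P) (M ⊕ M) ℂ) :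
    flatB (A * B) = flatB B * flatB A := by
  simp only [flatB, conjTranspose_mul, Matrix.mul_assoc]
  rw [← Matrix.mul_assoc (Jm P) (Jm P), Jm_mul_Jm, Matrix.one_mul]

end Helpers

private lemma pushl {a b c m : Type*} [Fintype b] [Fintype c]
    {M : Matrix a b ℂ} {N : Matrix b c ℂ} {P : Matrix a c ℂ} (h : M * N = P)
    (t : Matrix c m ℂ) : M * (N * t) = P * t := by
  rw [← Matrix.mul_assoc, h]

private lemma pushl2 {a b c d m : Type*} [Fintype b] [Fintype c] [Fintype d]
    {M : Matrix a b ℂ} {N : Matrix b c ℂ} {Q : Matrix c d ℂ} {P : Matrix a d ℂ}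
    (h : M * (N * Q) = P) (t : Matrix d m ℂ) : M * (N * (Q * t)) = P * t := by
  rw [← Matrix.mul_assoc N Q t, ← Matrix.mul_assoc, h]

section Tau

variable {R K P : Type*}

/-- The conjugation-swap operation characterizing doubled-up matrices. -/
def tauM (M : Matrix (R ⊕ R) (K ⊕ K) ℂ) : Matrix (R ⊕ R) (K ⊕ K) ℂ :=
  (M.map (starRingEnd ℂ)).submatrix Sum.swap Sum.swap

lemma tauM_dbl (Em Ep : Matrix R K ℂ) : tauM (dbl Em Ep) = dbl Em Ep := by
  ext i j
  rcases i with i | i <;> rcases j with j | j <;>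
    simp [tauM, dbl, Matrix.fromBlocks]

lemma isDbl_of_tauM (M : Matrix (R ⊕ R) (K ⊕ K) ℂ) (h : tauM M = M) :
    ∃ Em Ep, M = dbl Em Ep := by
  refine ⟨M.toBlocks₁₁, M.toBlocks₁₂, ?_⟩
  have h' : ∀ a b, tauM M a b = M a b := fun a b => congrFun (congrFun h a) b
  ext i j
  rcases i with i | i <;> rcases j with j | j
  · rfl
  · rfl
  · have := h' (Sum.inr i) (Sum.inl j)
    simp [tauM] at this
    simp [dbl, Matrix.fromBlocks, Matrix.toBlocks₁₂, ← this]
  · have := h' (Sum.inr i) (Sum.inr j)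
    simp [tauM] at this
    simp [dbl, Matrix.fromBlocks, Matrix.toBlocks₁₁, ← this]

lemma tauM_mul [Fintype K] (M : Matrix (R ⊕ R) (K ⊕ K) ℂ) (N : Matrix (K ⊕ K) (P ⊕ P) ℂ) :
    tauM (M * N) = tauM M * tauM N := by
  unfold tauM
  rw [Matrix.map_mul]
  have := Matrix.submatrix_mul_equiv (M.map (starRingEnd ℂ)) (N.map (starRingEnd ℂ))
    (Sum.swap (α := R) (β := R)) (Equiv.sumComm K K) (Sum.swap (α := P) (β := P))
  simpa using this.symm

lemma tauM_one [Fintype K] [DecidableEq K] : tauM (1 : Matrix (K ⊕ K) (K ⊕ K) ℂ) = 1 := by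
  unfold tauM
  rw [Matrix.map_one _ (map_zero _) (map_one _)]
  have := Matrix.submatrix_one_equiv (α := ℂ) (Equiv.sumComm K K)
  simpa using this

lemma tauM_sub (M N : Matrix (R ⊕ R) (K ⊕ K) ℂ) : tauM (M - N) = tauM M - tauM N := by
  ext i j
  simp [tauM]

lemma tauM_add (M N : Matrix (R ⊕ R) (K ⊕ K) ℂ) : tauM (M + N) = tauM M + tauM N := by
  ext i j
  simp [tauM]

lemma tauM_inv [Fintype K] [DecidableEq K] (M : Matrix (K ⊕ K) (K ⊕ K) ℂ)
    (h : IsUnit M) (hM : tauM M = M) : tauM M⁻¹ = M⁻¹ := by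
  have hdet := (Matrix.isUnit_iff_isUnit_det M).mp h
  have h1 : M * M⁻¹ = 1 := M.mul_nonsing_inv hdet
  have h2 := congrArg tauM h1
  rw [tauM_mul, tauM_one, hM] at h2
  exact (Matrix.inv_eq_right_inv h2).symm

end Tau

/-- The core computation: `♭`-unitarity of the Möbius transform. -/
private lemma core {α β : Type*} [Fintype α] [DecidableEq α] [Fintype β] [DecidableEq β]
    (A : Matrix (α ⊕ α) (α ⊕ α) ℂ) (B : Matrix (α ⊕ α) (β ⊕ β) ℂ)
    (C : Matrix (β ⊕ β) (α ⊕ α) ℂ) (D X w : Matrix (β ⊕ β) (β ⊕ β) ℂ)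
    (h1 : flatB A * A + flatB C * C = 1) (h2 : flatB A * B + flatB C * D = 0)
    (h3 : flatB B * A + flatB D * C = 0) (h4 : flatB B * B + flatB D * D = 1)
    (hX1 : flatB X * X = 1)
    (hWw : (1 - D * X) * w = 1) (hwW : w * (1 - D * X) = 1) :
    flatB (A + B * X * w * C) * (A + B * X * w * C) = 1 := by
  have h1n : flatB A * A = 1 - flatB C * C := eq_sub_of_add_eq h1
  have h2n : flatB A * B = -(flatB C * D) := eq_neg_of_add_eq_zero_left h2
  have h3n : flatB B * A = -(flatB D * C) := eq_neg_of_add_eq_zero_left h3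
  have h4n : flatB B * B = 1 - flatB D * D := eq_sub_of_add_eq h4
  have hDX : D * X = 1 - (1 - D * X) := (sub_sub_cancel 1 (D * X)).symm
  have hDXw : D * (X * w) = w - 1 := by
    rw [← Matrix.mul_assoc, hDX, Matrix.sub_mul, Matrix.one_mul, hWw]
  have hxdn : flatB X * flatB D = 1 - flatB (1 - D * X) := by
    rw [flatB_sub, flatB_one, flatB_mul, sub_sub_cancel]
  have hw'W' : flatB w * flatB (1 - D * X) = 1 := by
    rw [← flatB_mul, hWw, flatB_one]
  have hPsiFlat : flatB (A + B * X * w * C) =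
      flatB A + flatB C * (flatB w * (flatB X * flatB B)) := by
    rw [flatB_add, flatB_mul (B * X * w) C, flatB_mul (B * X) w, flatB_mul B X]
  rw [hPsiFlat]
  simp only [Matrix.add_mul, Matrix.mul_add, Matrix.sub_mul, Matrix.mul_sub,
    Matrix.neg_mul, Matrix.mul_neg, Matrix.one_mul, Matrix.mul_one, Matrix.mul_assoc,
    h1n, h3n, pushl h2n, pushl h4n, pushl2 hDXw, pushl hxdn, pushl hX1, pushl hw'W']
  abel

section Reindex

variable {n1 n2 : Type*} [Fintype n1] [DecidableEq n1] [Fintype n2] [DecidableEq n2]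

private lemma reindex_dbl (Sm Sp : Matrix (n1 ⊕ n2) (n1 ⊕ n2) ℂ) :
    (dbl Sm Sp).submatrix ⇑(Equiv.sumSumSumComm n1 n2 n1 n2).symm
        ⇑(Equiv.sumSumSumComm n1 n2 n1 n2).symm =
      Matrix.fromBlocks (dbl Sm.toBlocks₁₁ Sp.toBlocks₁₁) (dbl Sm.toBlocks₁₂ Sp.toBlocks₁₂)
        (dbl Sm.toBlocks₂₁ Sp.toBlocks₂₁) (dbl Sm.toBlocks₂₂ Sp.toBlocks₂₂) := by
  ext i j
  rcases i with (i | i) | (i | i) <;> rcases j with (j | j) | (j | j) <;>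
    simp [dbl, Matrix.fromBlocks, Matrix.toBlocks₁₁, Matrix.toBlocks₁₂, Matrix.toBlocks₂₁,
      Matrix.toBlocks₂₂, Equiv.sumSumSumComm, Equiv.sumAssoc, Equiv.sumComm]

private lemma reindex_J :
    (Jm (n1 ⊕ n2)).submatrix ⇑(Equiv.sumSumSumComm n1 n2 n1 n2).symm
        ⇑(Equiv.sumSumSumComm n1 n2 n1 n2).symm =
      Matrix.fromBlocks (Jm n1) 0 0 (Jm n2) := by
  ext i j
  rcases i with (i | i) | (i | i) <;> rcases j with (j | j) | (j | j) <;>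
    simp [Jm, Matrix.fromBlocks, Equiv.sumSumSumComm, Equiv.sumAssoc, Equiv.sumComm,
      Matrix.one_apply]

private lemma toBlocks_one₁₁ {a b : Type*} [DecidableEq a] [DecidableEq b] :
    (1 : Matrix (a ⊕ b) (a ⊕ b) ℂ).toBlocks₁₁ = 1 := by
  ext i j; simp [Matrix.toBlocks₁₁, Matrix.one_apply]

private lemma toBlocks_one₂₂ {a b : Type*} [DecidableEq a] [DecidableEq b] :
    (1 : Matrix (a ⊕ b) (a ⊕ b) ℂ).toBlocks₂₂ = 1 := by
  ext i j; simp [Matrix.toBlocks₂₂, Matrix.one_apply]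

private lemma toBlocks_one₁₂ {a b : Type*} [DecidableEq a] [DecidableEq b] :
    (1 : Matrix (a ⊕ b) (a ⊕ b) ℂ).toBlocks₁₂ = 0 := by
  ext i j; simp [Matrix.toBlocks₁₂, Matrix.one_apply]

private lemma toBlocks_one₂₁ {a b : Type*} [DecidableEq a] [DecidableEq b] :
    (1 : Matrix (a ⊕ b) (a ⊕ b) ℂ).toBlocks₂₁ = 0 := by
  ext i j; simp [Matrix.toBlocks₂₁, Matrix.one_apply]

private lemma mobius_aux (Sm Sp : Matrix (n1 ⊕ n2) (n1 ⊕ n2) ℂ) (hS : IsBog (dbl Sm Sp))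
    (X : Matrix (n2 ⊕ n2) (n2 ⊕ n2) ℂ) (hX : IsBog X)
    (hU : IsUnit (1 - dbl Sm.toBlocks₂₂ Sp.toBlocks₂₂ * X)) :
    IsBog (dbl Sm.toBlocks₁₁ Sp.toBlocks₁₁ +
      dbl Sm.toBlocks₁₂ Sp.toBlocks₁₂ * X *
        (1 - dbl Sm.toBlocks₂₂ Sp.toBlocks₂₂ * X)⁻¹ *
      dbl Sm.toBlocks₂₁ Sp.toBlocks₂₁) := by
  obtain ⟨-, hS1, -⟩ := hS
  obtain ⟨⟨Xm, Xp, hXd⟩, hX1, -⟩ := hX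
  set A := dbl Sm.toBlocks₁₁ Sp.toBlocks₁₁ with hA
  set B := dbl Sm.toBlocks₁₂ Sp.toBlocks₁₂ with hB
  set C := dbl Sm.toBlocks₂₁ Sp.toBlocks₂₁ with hC
  set D := dbl Sm.toBlocks₂₂ Sp.toBlocks₂₂ with hD
  set e := Equiv.sumSumSumComm n1 n2 n1 n2 with he
  -- transfer the ♭-unitarity relation to blocks
  have h0 : (flatB (dbl Sm Sp)).submatrix ⇑e.symm ⇑e.symm *
      (dbl Sm Sp).submatrix ⇑e.symm ⇑e.symm = 1 := by
    rw [Matrix.submatrix_mul_equiv, hS1, Matrix.submatrix_one_equiv]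
  have hflat : (flatB (dbl Sm Sp)).submatrix ⇑e.symm ⇑e.symm =
      Matrix.fromBlocks (flatB A) (flatB C) (flatB B) (flatB D) := by
    show (Jm (n1 ⊕ n2) * (dbl Sm Sp)ᴴ * Jm (n1 ⊕ n2)).submatrix ⇑e.symm ⇑e.symm = _
    rw [← Matrix.submatrix_mul_equiv (Jm (n1 ⊕ n2) * (dbl Sm Sp)ᴴ) (Jm (n1 ⊕ n2))
        ⇑e.symm e.symm ⇑e.symm,
      ← Matrix.submatrix_mul_equiv (Jm (n1 ⊕ n2)) ((dbl Sm Sp)ᴴ) ⇑e.symm e.symm ⇑e.symm,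
      ← conjTranspose_submatrix, reindex_dbl, reindex_J]
    rw [Matrix.fromBlocks_conjTranspose, Matrix.fromBlocks_multiply,
      Matrix.fromBlocks_multiply]
    simp [flatB, hA, hB, hC, hD]
  rw [hflat, reindex_dbl] at h0
  rw [Matrix.fromBlocks_multiply] at h0
  rw [← hA, ← hB, ← hC, ← hD] at h0
  have h1 : flatB A * A + flatB C * C = 1 := by
    have := congrArg Matrix.toBlocks₁₁ h0; simpa [toBlocks_one₁₁] using this
  have h2 : flatB A * B + flatB C * D = 0 := by
    have := congrArg Matrix.toBlocks₁₂ h0; simpa [toBlocks_one₁₂] using this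
  have h3 : flatB B * A + flatB D * C = 0 := by
    have := congrArg Matrix.toBlocks₂₁ h0; simpa [toBlocks_one₂₁] using this
  have h4 : flatB B * B + flatB D * D = 1 := by
    have := congrArg Matrix.toBlocks₂₂ h0; simpa [toBlocks_one₂₂] using this
  have hUdet := (Matrix.isUnit_iff_isUnit_det _).mp hU
  have hWw : (1 - D * X) * (1 - D * X)⁻¹ = 1 := Matrix.mul_nonsing_inv _ hUdet
  have hwW : (1 - D * X)⁻¹ * (1 - D * X) = 1 := Matrix.nonsing_inv_mul _ hUdet
  have hPsi1 : flatB (A + B * X * (1 - D * X)⁻¹ * C) * (A + B * X * (1 - D * X)⁻¹ * C) = 1 :=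
    core A B C D X ((1 - D * X)⁻¹) h1 h2 h3 h4 hX1 hWw hwW
  have hPsi2 : (A + B * X * (1 - D * X)⁻¹ * C) * flatB (A + B * X * (1 - D * X)⁻¹ * C) = 1 :=
    mul_eq_one_comm.mp hPsi1
  refine ⟨?_, hPsi1, hPsi2⟩
  -- doubled-up structure
  have hXtau : tauM X = X := by rw [hXd]; exact tauM_dbl _ _
  have hWtau : tauM (1 - D * X) = 1 - D * X := by
    rw [tauM_sub, tauM_one, tauM_mul, hD, tauM_dbl, hXtau]
  apply isDbl_of_tauM
  simp only [tauM_add, tauM_mul, tauM_inv _ hU hWtau, hA, hB, hC, tauM_dbl, hXtau]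

end Reindex

lemma isBog_one {K : Type*} [Fintype K] [DecidableEq K] :
    IsBog (1 : Matrix (K ⊕ K) (K ⊕ K) ℂ) := by
  refine ⟨⟨1, 0, ?_⟩, by rw [flatB_one, Matrix.one_mul], by rw [flatB_one, Matrix.one_mul]⟩
  rw [dbl, Matrix.map_zero _ (map_zero _), Matrix.map_one _ (map_zero _) (map_one _),
    Matrix.fromBlocks_one]

theorem mobius_maps_bog_to_bog {n1 n2 : Type*}
    [Fintype n1] [DecidableEq n1] [Fintype n2] [DecidableEq n2]
    (Sm Sp : Matrix (n1 ⊕ n2) (n1 ⊕ n2) ℂ) (hS : IsBog (dbl Sm Sp)) :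
    (∀ X : Matrix (n2 ⊕ n2) (n2 ⊕ n2) ℂ, IsBog X →
      IsUnit (1 - dbl Sm.toBlocks₂₂ Sp.toBlocks₂₂ * X) →
      IsBog (dbl Sm.toBlocks₁₁ Sp.toBlocks₁₁ +
        dbl Sm.toBlocks₁₂ Sp.toBlocks₁₂ * X *
          (1 - dbl Sm.toBlocks₂₂ Sp.toBlocks₂₂ * X)⁻¹ *
        dbl Sm.toBlocks₂₁ Sp.toBlocks₂₁)) ∧
    (IsUnit (1 - dbl Sm.toBlocks₂₂ Sp.toBlocks₂₂) →
      IsBog (dbl Sm.toBlocks₁₁ Sp.toBlocks₁₁ +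
        dbl Sm.toBlocks₁₂ Sp.toBlocks₁₂ *
          (1 - dbl Sm.toBlocks₂₂ Sp.toBlocks₂₂)⁻¹ *
        dbl Sm.toBlocks₂₁ Sp.toBlocks₂₁)) := by
  refine ⟨fun X hX hU => mobius_aux Sm Sp hS X hX hU, fun h => ?_⟩
  have := mobius_aux Sm Sp hS 1 isBog_one (by simpa using h)
  simpa using this
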